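/- Let M_Γ be the extracted model of an MCS Γ for HXP extended with the pure axioms no-loops (@_i ¬⟨aⁿ⟩i for all n>0) and no-join (@_j⟨a⟩i ∧ @_k⟨a⟩i → @_j k), and let φ be a formula with M_Γ, Δ_i ⊨ φ. Then the restriction of M_Γ to points reachable from {nom(k) | k ∈ Nom(φ) ∪ {i}} in at most md(φ) steps of R_a, with the nominal function adjusted to map nominals outside Nom(φ)∪{i} arbitrarily into the restriction, still satisfies φ at Δ_i. -/

import Mathlib

mutual
inductive PExp (P N M E : Type) : Type
  | mod : M → PExp P N M E
  | at_ : N → PExp P N M E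
  | test : NExp P N M E → PExp P N M E
  | comp : PExp P N M E → PExp P N M E → PExp P N M E
inductive NExp (P N M E : Type) : Type
  | prop : P → NExp P N M E
  | nom : N → NExp P N M E
  | neg : NExp P N M E → NExp P N M E
  | conj : NExp P N M E → NExp P N M E → NExp P N M E
  | cmpEq : E → PExp P N M E → PExp P N M E → NExp P N M E
  | cmpNeq : E → PExp P N M E → PExp P N M E → NExp P N M E
end

/-- An abstract hybrid data model (the requirement that each `sim e` is an
equivalence relation is stated as a separate hypothesis where needed). -/
structure Model (P N M E : Type) where
  W : Type
  sim : E → W → W → Prop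
  R : M → W → W → Prop
  V : W → P → Prop
  nom : N → W

mutual
def psat {P N M E : Type} (𝔐 : Model P N M E) : PExp P N M E → 𝔐.W → 𝔐.W → Prop
  | .mod a, m, n => 𝔐.R a m n
  | .at_ i, _, n => 𝔐.nom i = n
  | .test φ, m, n => m = n ∧ nsat 𝔐 φ m
  | .comp α β, m, n => ∃ l, psat 𝔐 α m l ∧ psat 𝔐 β l n
def nsat {P N M E : Type} (𝔐 : Model P N M E) : NExp P N M E → 𝔐.W → Prop
  | .prop p, m => 𝔐.V m p
  | .nom i, m => 𝔐.nom i = m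
  | .neg φ, m => ¬ nsat 𝔐 φ m
  | .conj φ ψ, m => nsat 𝔐 φ m ∧ nsat 𝔐 ψ m
  | .cmpEq e α β, m => ∃ n l, psat 𝔐 α m n ∧ psat 𝔐 β m l ∧ 𝔐.sim e n l
  | .cmpNeq e α β, m => ∃ n l, psat 𝔐 α m n ∧ psat 𝔐 β m l ∧ ¬ 𝔐.sim e n l
end

variable {P N M E : Type}

/-- `⊤` defined from a given node expression: `¬(φ ∧ ¬φ)`. -/
def NExp.top (φ : NExp P N M E) : NExp P N M E := .neg (.conj φ (.neg φ))
/-- `ε := [⊤]`. -/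
def PExp.eps (φ : NExp P N M E) : PExp P N M E := .test (NExp.top φ)
/-- `⟨α⟩φ := ⟨α[φ] =_e α[φ]⟩`. -/
def NExp.dia (e : E) (α : PExp P N M E) (φ : NExp P N M E) : NExp P N M E :=
  .cmpEq e (α.comp (.test φ)) (α.comp (.test φ))
/-- `[α]φ := ¬⟨α⟩¬φ`. -/
def NExp.box (e : E) (α : PExp P N M E) (φ : NExp P N M E) : NExp P N M E :=
  .neg (NExp.dia e α (.neg φ))
/-- `@_i φ := ⟨@_i⟩φ`. -/
def NExp.atf (e : E) (i : N) (φ : NExp P N M E) : NExp P N M E := NExp.dia e (.at_ i) φ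
def NExp.impl (φ ψ : NExp P N M E) : NExp P N M E := .neg (.conj φ (.neg ψ))
def NExp.iffN (φ ψ : NExp P N M E) : NExp P N M E := .conj (φ.impl ψ) (ψ.impl φ)

/-- Number of atomic modal steps in a path expression. -/
def numA : PExp P N M E → ℕ
  | .mod _ => 1
  | .at_ _ => 0
  | .test _ => 0
  | .comp α β => numA α + numA β

mutual
/-- Modal depth of a path expression. -/
def mdP {P N M E : Type} : PExp P N M E → ℕ
  | .mod _ => 1
  | .at_ _ => 0
  | .test φ => mdN φ
  | .comp α β => max (mdP α) (numA α + mdP β)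
/-- Modal depth of a node expression. -/
def mdN {P N M E : Type} : NExp P N M E → ℕ
  | .prop _ => 0
  | .nom _ => 0
  | .neg φ => mdN φ
  | .conj φ ψ => max (mdN φ) (mdN ψ)
  | .cmpEq _ α β => max (mdP α) (mdP β)
  | .cmpNeq _ α β => max (mdP α) (mdP β)
end

mutual
/-- Nominals occurring in a path expression. -/
def pnoms {P N M E : Type} : PExp P N M E → List N
  | .mod _ => []
  | .at_ i => [i]
  | .test φ => nnoms φ
  | .comp α β => pnoms α ++ pnoms β
/-- Nominals occurring in a node expression. -/
def nnoms {P N M E : Type} : NExp P N M E → List N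
  | .prop _ => []
  | .nom i => [i]
  | .neg φ => nnoms φ
  | .conj φ ψ => nnoms φ ++ nnoms ψ
  | .cmpEq _ α β => pnoms α ++ pnoms β
  | .cmpNeq _ α β => pnoms α ++ pnoms β
end

/-- Data comparison, `true` for `=_e` and `false` for `≠_e`. -/
def dcmp (b : Bool) : E → PExp P N M E → PExp P N M E → NExp P N M E :=
  match b with
  | true => NExp.cmpEq
  | false => NExp.cmpNeq

/-- A Boolean valuation that respects negation and conjunction. -/
def BoolHom (v : NExp P N M E → Bool) : Prop :=
  (∀ φ, v (NExp.neg φ) = ! v φ) ∧ (∀ φ ψ, v (NExp.conj φ ψ) = (v φ && v ψ))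

/-- Instances of propositional tautologies. -/
def Tautology (φ : NExp P N M E) : Prop :=
  ∀ v : NExp P N M E → Bool, BoolHom v → v φ = true

/-- The axiomatic system HXP, with an additional set `Ax` of extra axioms
(take `Ax := ∅` for the basic system). -/
inductive ThmS (Ax : Set (NExp P N M E)) : NExp P N M E → Prop
  | ax : ∀ {φ}, φ ∈ Ax → ThmS Ax φ
  | taut : ∀ {φ}, Tautology φ → ThmS Ax φ
  | mp : ∀ {φ ψ}, ThmS Ax (φ.impl ψ) → ThmS Ax φ → ThmS Ax ψ
  | axK : ∀ (e : E) (α : PExp P N M E) (φ ψ : NExp P N M E),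
      ThmS Ax ((NExp.box e α (φ.impl ψ)).impl ((NExp.box e α φ).impl (NExp.box e α ψ)))
  | nec : ∀ {φ} (e : E) (α : PExp P N M E), ThmS Ax φ → ThmS Ax (NExp.box e α φ)
  | atSelfDual : ∀ (e : E) (i : N) (φ : NExp P N M E),
      ThmS Ax ((NExp.neg (NExp.atf e i φ)).iffN (NExp.atf e i (NExp.neg φ)))
  | atIntro : ∀ (e : E) (i : N) (φ : NExp P N M E),
      ThmS Ax ((NExp.nom i).impl (φ.iffN (NExp.atf e i φ)))
  | atRefl : ∀ (e : E) (i : N), ThmS Ax (NExp.atf e i (.nom i))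
  | agree : ∀ (b : Bool) (e : E) (i j : N) (α β : PExp P N M E),
      ThmS Ax ((dcmp b e ((PExp.at_ j).comp ((PExp.at_ i).comp α)) β).iffN
        (dcmp b e ((PExp.at_ i).comp α) β))
  | back : ∀ (b : Bool) (e : E) (i : N) (γ α β : PExp P N M E),
      ThmS Ax ((dcmp b e (γ.comp ((PExp.at_ i).comp α)) β).impl
        (dcmp b e ((PExp.at_ i).comp α) β))
  | compAssoc : ∀ (b : Bool) (e : E) (α β γ η : PExp P N M E),
      ThmS Ax ((dcmp b e ((α.comp β).comp γ) η).iffN (dcmp b e (α.comp (β.comp γ)) η))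
  | compNeutral : ∀ (b : Bool) (e : E) (θ : NExp P N M E) (α β γ : PExp P N M E),
      ThmS Ax ((dcmp b e (α.comp β) γ).iffN (dcmp b e (α.comp ((PExp.eps θ).comp β)) γ))
  | compNeutralR : ∀ (b : Bool) (e : E) (θ : NExp P N M E) (α γ : PExp P N M E),
      ThmS Ax ((dcmp b e α γ).iffN (dcmp b e (α.comp (PExp.eps θ)) γ))
  | compNeutralL : ∀ (b : Bool) (e : E) (θ : NExp P N M E) (β γ : PExp P N M E),
      ThmS Ax ((dcmp b e β γ).iffN (dcmp b e ((PExp.eps θ).comp β) γ))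
  | compDist : ∀ (e : E) (α β : PExp P N M E) (φ : NExp P N M E),
      ThmS Ax ((NExp.dia e (α.comp β) φ).iffN (NExp.dia e α (NExp.dia e β φ)))
  | equalAx : ∀ (e : E) (θ : NExp P N M E),
      ThmS Ax (NExp.cmpEq e (PExp.eps θ) (PExp.eps θ))
  | distinctAx : ∀ (e : E) (θ : NExp P N M E),
      ThmS Ax (NExp.neg (NExp.cmpNeq e (PExp.eps θ) (PExp.eps θ)))
  | atData : ∀ (e : E) (i j : N),
      ThmS Ax ((NExp.neg (NExp.cmpEq e (.at_ i) (.at_ j))).iffN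
        (NExp.cmpNeq e (.at_ i) (.at_ j)))
  | epsTrans : ∀ (e : E) (θ : NExp P N M E) (α β : PExp P N M E),
      ThmS Ax (((NExp.cmpEq e (PExp.eps θ) α).conj (NExp.cmpEq e (PExp.eps θ) β)).impl
        (NExp.cmpEq e α β))
  | cmpComm : ∀ (b : Bool) (e : E) (α β : PExp P N M E),
      ThmS Ax ((dcmp b e α β).iffN (dcmp b e β α))
  | cmpTest : ∀ (b : Bool) (e : E) (φ : NExp P N M E) (α β : PExp P N M E),
      ThmS Ax ((dcmp b e ((PExp.test φ).comp α) β).iffN (φ.conj (dcmp b e α β)))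
  | atCmpDist : ∀ (b : Bool) (e e' : E) (i : N) (α β : PExp P N M E),
      ThmS Ax ((dcmp b e ((PExp.at_ i).comp α) ((PExp.at_ i).comp β)).impl
        (NExp.atf e' i (dcmp b e α β)))
  | subpath : ∀ (b : Bool) (e e' : E) (θ : NExp P N M E) (α β γ : PExp P N M E),
      ThmS Ax ((dcmp b e (α.comp β) γ).impl (NExp.dia e' α (NExp.top θ)))
  | compCmpDist : ∀ (b : Bool) (e e' : E) (α β γ : PExp P N M E),
      ThmS Ax ((NExp.dia e' α (dcmp b e β γ)).impl (dcmp b e (α.comp β) (α.comp γ)))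
  | name : ∀ {φ} (e : E) (j : N), ThmS Ax (NExp.atf e j φ) → j ∉ nnoms φ → ThmS Ax φ
  | paste : ∀ {θ} (b : Bool) (e e' : E) (i j : N) (a : M) (α β : PExp P N M E),
      j ≠ i → j ∉ pnoms α → j ∉ pnoms β → j ∉ nnoms θ →
      ThmS Ax (((NExp.atf e' i (NExp.dia e' (.mod a) (.nom j))).conj
        (dcmp b e ((PExp.at_ j).comp α) β)).impl θ) →
      ThmS Ax ((dcmp b e ((PExp.at_ i).comp ((PExp.mod a).comp α)) β).impl θ)

/-- `implList [χ₁,…,χₙ] φ = χ₁ → (… → (χₙ → φ))`. -/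
def implList (L : List (NExp P N M E)) (φ : NExp P N M E) : NExp P N M E :=
  L.foldr NExp.impl φ

/-- `φ` is a syntactic consequence of `Γ` (in HXP extended by `Ax`). -/
def Deriv (Ax : Set (NExp P N M E)) (Γ : Set (NExp P N M E)) (φ : NExp P N M E) : Prop :=
  ∃ L : List (NExp P N M E), (∀ ψ ∈ L, ψ ∈ Γ) ∧ ThmS Ax (implList L φ)

/-- Consistency: `Γ` does not derive a contradiction. -/
def Consistent (Ax Γ : Set (NExp P N M E)) : Prop :=
  ¬ ∃ φ, Deriv Ax Γ φ ∧ Deriv Ax Γ (NExp.neg φ)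

/-- Maximal consistent set. -/
def MCS (Ax Γ : Set (NExp P N M E)) : Prop :=
  Consistent Ax Γ ∧ ∀ φ ∉ Γ, ¬ Consistent Ax (insert φ Γ)

/-- `Γ` is named: it contains some nominal. -/
def Named (Γ : Set (NExp P N M E)) : Prop := ∃ i : N, NExp.nom i ∈ Γ

/-- `Γ` is pasted (`e₀` is the equality symbol used in the abbreviations
`@_i χ` and `⟨a⟩χ`). -/
def Pasted (e₀ : E) (Γ : Set (NExp P N M E)) : Prop :=
  ∀ (b : Bool) (e : E) (i : N) (a : M) (α β : PExp P N M E),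
    dcmp b e ((PExp.at_ i).comp ((PExp.mod a).comp α)) β ∈ Γ →
    ∃ j : N, (NExp.atf e₀ i (NExp.dia e₀ (.mod a) (.nom j))).conj
      (dcmp b e ((PExp.at_ j).comp α) β) ∈ Γ

/-- `Δ_i = {j | @_i j ∈ Γ}`. -/
def ΔS (e₀ : E) (Γ : Set (NExp P N M E)) (i : N) : Set N :=
  {j | NExp.atf e₀ i (.nom j) ∈ Γ}

/-- The model extracted from `Γ`: the domain is `{Δ_i | i a nominal}`,
`Δ_i R_a Δ_j` iff `@_i⟨a⟩j ∈ Γ`, `Δ_i ∼_e Δ_j` iff `@_i⟨ε =_e @_j⟩ ∈ Γ`,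
`p ∈ V(Δ_i)` iff `@_i p ∈ Γ`, and `nom(i) = Δ_i`. -/
def extModel (e₀ : E) (θ₀ : NExp P N M E) (Γ : Set (NExp P N M E)) : Model P N M E where
  W := {S : Set N // ∃ i, S = ΔS e₀ Γ i}
  sim e S T := ∃ i j, S.1 = ΔS e₀ Γ i ∧ T.1 = ΔS e₀ Γ j ∧
    NExp.atf e₀ i (NExp.cmpEq e (PExp.eps θ₀) (.at_ j)) ∈ Γ
  R a S T := ∃ i j, S.1 = ΔS e₀ Γ i ∧ T.1 = ΔS e₀ Γ j ∧
    NExp.atf e₀ i (NExp.dia e₀ (.mod a) (.nom j)) ∈ Γ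
  V S p := ∃ i, S.1 = ΔS e₀ Γ i ∧ NExp.atf e₀ i (.prop p) ∈ Γ
  nom i := ⟨ΔS e₀ Γ i, i, rfl⟩

/-- `a^{n+1}` : composition of `n+1` steps of the (unique) modality. -/
def apow {P N : Type} : ℕ → PExp P N Unit Unit
  | 0 => .mod ()
  | n + 1 => .comp (.mod ()) (apow n)

/-- The pure axioms `no-loops` (`@_i ¬⟨aⁿ⟩i` for all `n > 0`) and `no-join`
(`@_j⟨a⟩i ∧ @_k⟨a⟩i → @_j k`). -/
def forestAx (P N : Type) : Set (NExp P N Unit Unit) :=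
  {φ | (∃ (i : N) (n : ℕ),
          φ = NExp.atf () i (NExp.neg (NExp.dia () (apow n) (.nom i)))) ∨
       (∃ i j k : N,
          φ = ((NExp.atf () j (NExp.dia () (.mod ()) (.nom i))).conj
                (NExp.atf () k (NExp.dia () (.mod ()) (.nom i)))).impl
              (NExp.atf () j (.nom k)))}

/-- `iterR R h x y` : `y` is reachable from `x` in exactly `h` `R`-steps. -/
def iterR {W : Type} (R : W → W → Prop) : ℕ → W → W → Prop
  | 0, x, y => x = y
  | h + 1, x, y => ∃ z, R x z ∧ iterR R h z y

/-- The points of the extracted model reachable in at most `md(φ)` steps from a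
point named by a nominal of `φ` or by `i`. -/
def restS (θ₀ : NExp P N Unit Unit) (Γ : Set (NExp P N Unit Unit))
    (φ : NExp P N Unit Unit) (i : N) : Set (extModel () θ₀ Γ).W :=
  {w | ∃ k ∈ i :: nnoms φ, ∃ h ≤ mdN φ,
        iterR ((extModel () θ₀ Γ).R ()) h ((extModel () θ₀ Γ).nom k) w}

/-- Restriction of a model to a subset `S` of its domain, with an adjusted
nominal assignment `nm`. -/
def restrModel (𝔪 : Model P N Unit Unit) (S : Set 𝔪.W) (nm : N → {x // x ∈ S}) :
    Model P N Unit Unit where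
  W := {x // x ∈ S}
  sim e x y := 𝔪.sim e x.1 y.1
  R a x y := 𝔪.R a x.1 y.1
  V x p := 𝔪.V x.1 p
  nom := nm

theorem iterR_snoc {W : Type} {R : W → W → Prop} :
    ∀ {h : ℕ} {x y z : W}, iterR R h x y → R y z → iterR R (h + 1) x z := by
  intro h
  induction h with
  | zero =>
    intro x y z hxy hyz
    cases hxy
    exact ⟨z, hyz, rfl⟩
  | succ n ih =>
    intro x y z hxy hyz
    obtain ⟨w, hw, hrest⟩ := hxy
    exact ⟨w, hw, ih hrest hyz⟩

theorem numA_le_mdP : ∀ (α : PExp P N M E), numA α ≤ mdP α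
  | .mod _ => le_refl _
  | .at_ _ => le_refl _
  | .test _ => Nat.zero_le _
  | .comp α β => by
    have h1 := numA_le_mdP α
    have h2 := numA_le_mdP β
    simp only [numA, mdP]
    omega

/-- `w` is reachable from a point named by some `k ∈ K` in at most `d` steps. -/
def depR (𝔪 : Model P N Unit Unit) (K : List N) (d : ℕ) (w : 𝔪.W) : Prop :=
  ∃ k ∈ K, ∃ h ≤ d, iterR (𝔪.R ()) h (𝔪.nom k) w

theorem depR_mono {𝔪 : Model P N Unit Unit} {K : List N} {d d' : ℕ} {w : 𝔪.W}
    (h : depR 𝔪 K d w) (hdd : d ≤ d') : depR 𝔪 K d' w := by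
  obtain ⟨k, hk, n, hn, hit⟩ := h
  exact ⟨k, hk, n, le_trans hn hdd, hit⟩

mutual

theorem pathRestr (𝔪 : Model P N Unit Unit) (K : List N) (D : ℕ)
    (S : Set 𝔪.W) (hS : ∀ w d, d ≤ D → depR 𝔪 K d w → w ∈ S)
    (nm : N → {x // x ∈ S}) (hnm : ∀ k ∈ K, (nm k).1 = 𝔪.nom k) :
    ∀ (α : PExp P N Unit Unit), (∀ j ∈ pnoms α, j ∈ K) →
    ∀ (d : ℕ) (m : 𝔪.W), depR 𝔪 K d m → ∀ (hmS : m ∈ S), d + mdP α ≤ D →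
    ((∀ n, psat 𝔪 α m n → ∃ hn : n ∈ S, depR 𝔪 K (d + numA α) n ∧
        psat (restrModel 𝔪 S nm) α ⟨m, hmS⟩ ⟨n, hn⟩) ∧
     (∀ n' : {x // x ∈ S}, psat (restrModel 𝔪 S nm) α ⟨m, hmS⟩ n' →
        depR 𝔪 K (d + numA α) n'.1 ∧ psat 𝔪 α m n'.1))
  | .mod a, hno, d, m, hm, hmS, hb => by
    simp only [mdP] at hb
    constructor
    · intro n hR
      have hdn : depR 𝔪 K (d + numA (PExp.mod a : PExp P N Unit Unit)) n := by
        obtain ⟨k, hk, h, hh, hit⟩ := hm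
        exact ⟨k, hk, h + 1, by simp [numA]; omega, iterR_snoc hit (by cases a; exact hR)⟩
      exact ⟨hS n _ (by simp [numA] at hdn ⊢; omega) hdn, hdn, hR⟩
    · intro n' hR
      have hR' : 𝔪.R a m n'.1 := hR
      refine ⟨?_, hR'⟩
      obtain ⟨k, hk, h, hh, hit⟩ := hm
      exact ⟨k, hk, h + 1, by simp [numA]; omega, iterR_snoc hit (by cases a; exact hR')⟩
  | .at_ j, hno, d, m, hm, hmS, hb => by
    have hjK : j ∈ K := hno j (by simp [pnoms])
    constructor
    · intro n hR
      have hR' : 𝔪.nom j = n := hR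
      have hdn : depR 𝔪 K (d + numA (PExp.at_ j : PExp P N Unit Unit)) n :=
        ⟨j, hjK, 0, Nat.zero_le _, hR'⟩
      refine ⟨hS n _ (by simp only [mdP] at hb; simp [numA]; omega) hdn, hdn, ?_⟩
      show nm j = _
      exact Subtype.ext (by rw [hnm j hjK]; exact hR')
    · intro n' hR
      have hR' : nm j = n' := hR
      have h1 : 𝔪.nom j = n'.1 := by rw [← hnm j hjK, hR']
      exact ⟨⟨j, hjK, 0, Nat.zero_le _, h1⟩, h1⟩
  | .test ψ, hno, d, m, hm, hmS, hb => by
    simp only [mdP] at hb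
    have hiff := nodeRestr 𝔪 K D S hS nm hnm ψ (fun j hj => hno j (by simpa [pnoms] using hj))
      d m hm hmS hb
    constructor
    · intro n hR
      obtain ⟨heq, hψ⟩ := hR
      subst heq
      exact ⟨hmS, by simpa [numA] using hm, rfl, hiff.mp hψ⟩
    · intro n' hR
      obtain ⟨heq, hψ⟩ := hR
      subst heq
      exact ⟨by simpa [numA] using hm, rfl, hiff.mpr hψ⟩
  | .comp α β, hno, d, m, hm, hmS, hb => by
    simp only [mdP] at hb
    have hbα : d + mdP α ≤ D := by omega
    have hbβ : (d + numA α) + mdP β ≤ D := by omega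
    have ihα := pathRestr 𝔪 K D S hS nm hnm α
      (fun j hj => hno j (by simp [pnoms]; exact Or.inl hj)) d m hm hmS hbα
    constructor
    · intro n hR
      obtain ⟨l, h1, h2⟩ := hR
      obtain ⟨hlS, hdl, h1'⟩ := ihα.1 l h1
      have ihβ := pathRestr 𝔪 K D S hS nm hnm β
        (fun j hj => hno j (by simp [pnoms]; exact Or.inr hj)) (d + numA α) l hdl hlS hbβ
      obtain ⟨hnS, hdn, h2'⟩ := ihβ.1 n h2
      exact ⟨hnS, by simpa [numA, Nat.add_assoc] using hdn, ⟨l, hlS⟩, h1', h2'⟩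
    · intro n' hR
      obtain ⟨l', h1, h2⟩ := hR
      obtain ⟨hdl, h1'⟩ := ihα.2 l' h1
      have ihβ := pathRestr 𝔪 K D S hS nm hnm β
        (fun j hj => hno j (by simp [pnoms]; exact Or.inr hj)) (d + numA α) l'.1 hdl l'.2 hbβ
      have h2'' : psat (restrModel 𝔪 S nm) β ⟨l'.1, l'.2⟩ n' := h2
      obtain ⟨hdn, h2'⟩ := ihβ.2 n' h2''
      exact ⟨by simpa [numA, Nat.add_assoc] using hdn, l'.1, h1', h2'⟩

theorem nodeRestr (𝔪 : Model P N Unit Unit) (K : List N) (D : ℕ)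
    (S : Set 𝔪.W) (hS : ∀ w d, d ≤ D → depR 𝔪 K d w → w ∈ S)
    (nm : N → {x // x ∈ S}) (hnm : ∀ k ∈ K, (nm k).1 = 𝔪.nom k) :
    ∀ (ψ : NExp P N Unit Unit), (∀ j ∈ nnoms ψ, j ∈ K) →
    ∀ (d : ℕ) (m : 𝔪.W), depR 𝔪 K d m → ∀ (hmS : m ∈ S), d + mdN ψ ≤ D →
    (nsat 𝔪 ψ m ↔ nsat (restrModel 𝔪 S nm) ψ ⟨m, hmS⟩)
  | .prop p, hno, d, m, hm, hmS, hb => Iff.rfl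
  | .nom j, hno, d, m, hm, hmS, hb => by
    have hjK : j ∈ K := hno j (by simp [nnoms])
    constructor
    · intro h
      show nm j = ⟨m, hmS⟩
      exact Subtype.ext (by rw [hnm j hjK]; exact h)
    · intro h
      have h' : nm j = ⟨m, hmS⟩ := h
      show 𝔪.nom j = m
      rw [← hnm j hjK, h']
  | .neg ψ, hno, d, m, hm, hmS, hb => by
    have hiff := nodeRestr 𝔪 K D S hS nm hnm ψ (fun j hj => hno j (by simpa [nnoms] using hj))
      d m hm hmS (by simpa [mdN] using hb)
    exact not_congr hiff
  | .conj ψ χ, hno, d, m, hm, hmS, hb => by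
    simp only [mdN] at hb
    have h1 := nodeRestr 𝔪 K D S hS nm hnm ψ
      (fun j hj => hno j (by simp [nnoms]; exact Or.inl hj)) d m hm hmS (by omega)
    have h2 := nodeRestr 𝔪 K D S hS nm hnm χ
      (fun j hj => hno j (by simp [nnoms]; exact Or.inr hj)) d m hm hmS (by omega)
    exact and_congr h1 h2
  | .cmpEq e α β, hno, d, m, hm, hmS, hb => by
    simp only [mdN] at hb
    have ihα := pathRestr 𝔪 K D S hS nm hnm α
      (fun j hj => hno j (by simp [nnoms]; exact Or.inl hj)) d m hm hmS (by omega)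
    have ihβ := pathRestr 𝔪 K D S hS nm hnm β
      (fun j hj => hno j (by simp [nnoms]; exact Or.inr hj)) d m hm hmS (by omega)
    constructor
    · rintro ⟨n, l, hα, hβ, hsim⟩
      obtain ⟨hnS, _, hα'⟩ := ihα.1 n hα
      obtain ⟨hlS, _, hβ'⟩ := ihβ.1 l hβ
      exact ⟨⟨n, hnS⟩, ⟨l, hlS⟩, hα', hβ', hsim⟩
    · rintro ⟨n', l', hα', hβ', hsim'⟩
      obtain ⟨_, hα⟩ := ihα.2 n' hα'
      obtain ⟨_, hβ⟩ := ihβ.2 l' hβ'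
      exact ⟨n'.1, l'.1, hα, hβ, hsim'⟩
  | .cmpNeq e α β, hno, d, m, hm, hmS, hb => by
    simp only [mdN] at hb
    have ihα := pathRestr 𝔪 K D S hS nm hnm α
      (fun j hj => hno j (by simp [nnoms]; exact Or.inl hj)) d m hm hmS (by omega)
    have ihβ := pathRestr 𝔪 K D S hS nm hnm β
      (fun j hj => hno j (by simp [nnoms]; exact Or.inr hj)) d m hm hmS (by omega)
    constructor
    · rintro ⟨n, l, hα, hβ, hsim⟩
      obtain ⟨hnS, _, hα'⟩ := ihα.1 n hα
      obtain ⟨hlS, _, hβ'⟩ := ihβ.1 l hβ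
      exact ⟨⟨n, hnS⟩, ⟨l, hlS⟩, hα', hβ', hsim⟩
    · rintro ⟨n', l', hα', hβ', hsim'⟩
      obtain ⟨_, hα⟩ := ihα.2 n' hα'
      obtain ⟨_, hβ⟩ := ihβ.2 l' hβ'
      exact ⟨n'.1, l'.1, hα, hβ, hsim'⟩

end

/-- Restriction lemma for extracted models over HXP + forest axioms: if
`M_Γ, Δ_i ⊨ φ` then the restriction of `M_Γ` to the points reachable in at most
`md(φ)` steps from the points named by `Nom(φ) ∪ {i}` — with any adjustment of
the nominal assignment that is the identity on `Nom(φ) ∪ {i}` — still satisfies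
`φ` at `Δ_i`. -/
theorem restriction_lemma (θ₀ : NExp P N Unit Unit) (Γ : Set (NExp P N Unit Unit))
    (hmcs : MCS (forestAx P N) Γ) (hnamed : Named Γ) (hpasted : Pasted () Γ)
    (φ : NExp P N Unit Unit) (i : N)
    (hφ : nsat (extModel () θ₀ Γ) φ ((extModel () θ₀ Γ).nom i)) :
    ∀ nm : N → {x // x ∈ restS θ₀ Γ φ i},
      (∀ k ∈ i :: nnoms φ, (nm k).1 = (extModel () θ₀ Γ).nom k) →
      nsat (restrModel (extModel () θ₀ Γ) (restS θ₀ Γ φ i) nm) φ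
        ⟨(extModel () θ₀ Γ).nom i,
          by exact ⟨i, List.mem_cons_self, 0, Nat.zero_le _, rfl⟩⟩ := by
  intro nm hnm
  have hS : ∀ (w : (extModel () θ₀ Γ).W) (d : ℕ), d ≤ mdN φ →
      depR (extModel () θ₀ Γ) (i :: nnoms φ) d w → w ∈ restS θ₀ Γ φ i := by
    rintro w d hd ⟨k, hk, h, hh, hit⟩
    exact ⟨k, hk, h, le_trans hh hd, hit⟩
  have hdep : depR (extModel () θ₀ Γ) (i :: nnoms φ) 0 ((extModel () θ₀ Γ).nom i) :=
    ⟨i, List.mem_cons_self, 0, le_refl _, rfl⟩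
  exact (nodeRestr (extModel () θ₀ Γ) (i :: nnoms φ) (mdN φ) (restS θ₀ Γ φ i)
    hS nm hnm φ (fun j hj => List.mem_cons_of_mem _ hj) 0 _ hdep
    (hS _ 0 (Nat.zero_le _) hdep) (by omega)).mp hφ
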